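/- Let a = {a_n} be a positive non-increasing summable sequence with sum 1 and D_a = { ∑_{i=k}^∞ a_i : k ∈ ℕ } ∪ {0}. Then for all θ ∈ [0,1], the lower θ-intermediate dimension of D_a equals θb/(1 − (1−θ)b), where b is the lower box-counting dimension of D_a. -/

import Mathlib

open Filter Set Topology

/-- Number of closed balls of radius `δ` needed to cover `F`. -/
noncomputable def coverNum (F : Set ℝ) (δ : ℝ) : ℕ :=
  sInf {n : ℕ | ∃ S : Finset ℝ, S.card = n ∧ F ⊆ ⋃ x ∈ S, Metric.closedBall x δ}

/-- Upper box-counting dimension. -/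
noncomputable def upperBoxDim (F : Set ℝ) : ℝ :=
  limsup (fun δ : ℝ => Real.log (coverNum F δ) / -Real.log δ) (nhdsWithin 0 (Set.Ioi 0))

/-- Lower box-counting dimension. -/
noncomputable def lowerBoxDim (F : Set ℝ) : ℝ :=
  liminf (fun δ : ℝ => Real.log (coverNum F δ) / -Real.log δ) (nhdsWithin 0 (Set.Ioi 0))

/-- Assouad dimension. -/
noncomputable def assouadDim (E : Set ℝ) : ℝ :=
  sInf {α : ℝ | ∃ c > (0:ℝ), ∃ ρ > (0:ℝ), ∀ x ∈ E, ∀ r R : ℝ, 0 < r → r < R → R < ρ →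
    (coverNum (Metric.ball x R ∩ E) r : ℝ) ≤ c * (R / r) ^ α}

/-- Lower (Assouad) dimension. -/
noncomputable def lowerAssouadDim (E : Set ℝ) : ℝ :=
  sSup {α : ℝ | ∃ c > (0:ℝ), ∃ ρ > (0:ℝ), ∀ x ∈ E, ∀ r R : ℝ, 0 < r → r < R → R < ρ →
    c * (R / r) ^ α ≤ (coverNum (Metric.ball x R ∩ E) r : ℝ)}

/-- Upper θ-intermediate dimension (with the convention that at θ = 0 it is the
Hausdorff dimension). -/
noncomputable def upperIntDim (θ : ℝ) (F : Set ℝ) : ℝ :=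
  if θ = 0 then (dimH F).toReal else
  sInf {s : ℝ | 0 ≤ s ∧ ∀ ε > (0:ℝ), ∃ δ₀ > (0:ℝ), ∀ δ : ℝ, 0 < δ → δ ≤ δ₀ →
    ∃ (I : Finset ℕ) (U : ℕ → Set ℝ), (F ⊆ ⋃ i ∈ I, U i) ∧
      (∀ i ∈ I, δ ^ (1 / θ) ≤ Metric.diam (U i) ∧ Metric.diam (U i) ≤ δ) ∧
      ∑ i ∈ I, Metric.diam (U i) ^ s ≤ ε}

/-- Lower θ-intermediate dimension (with the convention that at θ = 0 it is the
Hausdorff dimension). -/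
noncomputable def lowerIntDim (θ : ℝ) (F : Set ℝ) : ℝ :=
  if θ = 0 then (dimH F).toReal else
  sInf {s : ℝ | 0 ≤ s ∧ ∀ ε > (0:ℝ), ∀ δ₀ > (0:ℝ), ∃ δ : ℝ, 0 < δ ∧ δ ≤ δ₀ ∧
    ∃ (I : Finset ℕ) (U : ℕ → Set ℝ), (F ⊆ ⋃ i ∈ I, U i) ∧
      (∀ i ∈ I, δ ^ (1 / θ) ≤ Metric.diam (U i) ∧ Metric.diam (U i) ≤ δ) ∧
      ∑ i ∈ I, Metric.diam (U i) ^ s ≤ ε}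

/-- tails `x_n = ∑_{i=n}^∞ a_i` (the sequence `a` is indexed from 1;
the value `a 0` is irrelevant). -/
noncomputable def xseq (a : ℕ → ℝ) (n : ℕ) : ℝ := ∑' i : ℕ, a (n + i)

/-- `s_n = 2^{-n} x_{2^n}`. -/
noncomputable def sseq (a : ℕ → ℝ) (n : ℕ) : ℝ := xseq a (2 ^ n) / 2 ^ n

/-- `r_n = 2^{-n} ∑_{i=2^n}^{2^{n+1}-1} a_i`. -/
noncomputable def rseq (a : ℕ → ℝ) (n : ℕ) : ℝ :=
  (∑ i ∈ Finset.range (2 ^ n), a (2 ^ n + i)) / 2 ^ n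

/-- The countable complementary set `D_a = {x_k : k ≥ 1} ∪ {0}`. -/
noncomputable def Da (a : ℕ → ℝ) : Set ℝ := {0} ∪ {y : ℝ | ∃ k ≥ 1, y = xseq a k}

/-- Length of the interval corresponding to node `m` (in binary-tree indexing, root `1`)
in the construction of the decreasing Cantor set: the sum of the gaps in the subtree of `m`. -/
noncomputable def clen (a : ℕ → ℝ) (m : ℕ) : ℝ :=
  ∑' k : ℕ, ∑ i ∈ Finset.range (2 ^ k), a (2 ^ k * m + i)

/-- Left endpoint of the interval corresponding to node `m`. -/
noncomputable def lft (a : ℕ → ℝ) : ℕ → ℝ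
  | 0 => 0
  | 1 => 0
  | n + 2 =>
    if (n + 2) % 2 = 0 then lft a ((n + 2) / 2)
    else lft a ((n + 2) / 2) + clen a (n + 1) + a ((n + 2) / 2)
termination_by n => n
decreasing_by all_goals omega

/-- The closed interval corresponding to node `m`:  node `2^n + j - 1` is the
interval `I_{n,j}` of step `n`, for `1 ≤ j ≤ 2^n`. -/
noncomputable def node (a : ℕ → ℝ) (m : ℕ) : Set ℝ := Set.Icc (lft a m) (lft a m + clen a m)

/-- The decreasing Cantor set `C_a` associated with the sequence `a`. -/
noncomputable def cantorSetOf (a : ℕ → ℝ) : Set ℝ :=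
  ⋂ n : ℕ, ⋃ j ∈ Finset.Icc 1 (2 ^ n), node a (2 ^ n + j - 1)

/-- `E` is a complementary set of the sequence `a`: a closed subset of `[0,1]`
whose complement in `[0,1]` is a disjoint union of open intervals of lengths `a_1, a_2, …`. -/
def IsComplSet (a : ℕ → ℝ) (E : Set ℝ) : Prop :=
  ∃ g : ℕ → ℝ,
    (∀ n ≥ 1, Set.Ioo (g n) (g n + a n) ⊆ Set.Icc 0 1) ∧
    (∀ m ≥ 1, ∀ n ≥ 1, m ≠ n →
      Disjoint (Set.Ioo (g m) (g m + a m)) (Set.Ioo (g n) (g n + a n))) ∧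
    E = Set.Icc 0 1 \ ⋃ n ∈ {k : ℕ | 1 ≤ k}, Set.Ioo (g n) (g n + a n)

/-- `γ_{θ,a}(r) = max{ m : s_m ≥ s_r^{1/θ} }`. -/
noncomputable def gammaIdx (a : ℕ → ℝ) (θ : ℝ) (r : ℕ) : ℕ :=
  sSup {m : ℕ | sseq a r ^ (1 / θ) ≤ sseq a m}

section Seq
variable {a : ℕ → ℝ}

lemma summable_shift (hsumm : Summable fun n => a (n + 1)) (n : ℕ) (hn : 1 ≤ n) :
    Summable fun i => a (n + i) := by
  have h := hsumm.comp_injective (add_right_injective (n - 1))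
  have : ((fun n => a (n + 1)) ∘ fun i => (n - 1) + i) = fun i => a (n + i) := by
    funext i; simp only [Function.comp]; congr 1; omega
  rwa [this] at h

lemma a_mono' (hmono : ∀ n ≥ 1, a (n + 1) ≤ a n) {m n : ℕ} (hm : 1 ≤ m) (hmn : m ≤ n) :
    a n ≤ a m := by
  induction n with
  | zero => omega
  | succ k ih =>
    rcases Nat.lt_or_ge m (k+1) with h | h
    · exact le_trans (hmono k (by omega)) (ih (by omega))
    · have : m = k + 1 := by omega
      simp [this]

lemma xseq_succ (hsumm : Summable fun n => a (n + 1)) {n : ℕ} (hn : 1 ≤ n) :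
    xseq a n = a n + xseq a (n + 1) := by
  have hs := summable_shift hsumm n hn
  simp only [xseq]
  rw [Summable.tsum_eq_zero_add hs]
  congr 1
  apply tsum_congr; intro i; congr 1; omega

lemma xseq_nonneg (hpos : ∀ n ≥ 1, 0 < a n) (hsumm : Summable fun n => a (n + 1))
    {n : ℕ} (hn : 1 ≤ n) : 0 ≤ xseq a n :=
  tsum_nonneg fun i => le_of_lt (hpos (n + i) (by omega))

lemma a_le_xseq (hpos : ∀ n ≥ 1, 0 < a n) (hsumm : Summable fun n => a (n + 1))
    {n : ℕ} (hn : 1 ≤ n) : a n ≤ xseq a n := by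
  have := Summable.le_tsum (summable_shift hsumm n hn) 0
    (fun j _ => le_of_lt (hpos (n + j) (by omega)))
  simpa [xseq] using this

lemma xseq_pos (hpos : ∀ n ≥ 1, 0 < a n) (hsumm : Summable fun n => a (n + 1))
    {n : ℕ} (hn : 1 ≤ n) : 0 < xseq a n :=
  lt_of_lt_of_le (hpos n hn) (a_le_xseq hpos hsumm hn)

lemma xseq_one (htot : ∑' n : ℕ, a (n + 1) = 1) : xseq a 1 = 1 := by
  rw [xseq, ← htot]
  apply tsum_congr; intro i; congr 1; omega

lemma xseq_anti (hpos : ∀ n ≥ 1, 0 < a n) (hsumm : Summable fun n => a (n + 1))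
    {m n : ℕ} (hm : 1 ≤ m) (hmn : m ≤ n) : xseq a n ≤ xseq a m := by
  induction n with
  | zero => omega
  | succ k ih =>
    rcases Nat.lt_or_ge m (k+1) with h | h
    · have h1 := xseq_succ hsumm (show 1 ≤ k by omega)
      have h2 := hpos k (by omega)
      have := ih (by omega)
      linarith
    · have : m = k + 1 := by omega
      simp [this]

lemma xseq_le_one (hpos : ∀ n ≥ 1, 0 < a n) (hsumm : Summable fun n => a (n + 1))
    (htot : ∑' n : ℕ, a (n + 1) = 1) {n : ℕ} (hn : 1 ≤ n) : xseq a n ≤ 1 := by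
  rw [← xseq_one htot]; exact xseq_anti hpos hsumm le_rfl hn

lemma xseq_tendsto : Tendsto (fun n => xseq a n) atTop (𝓝 0) := by
  have h := tendsto_sum_nat_add a
  have : (fun i => ∑' k : ℕ, a (k + i)) = fun n => xseq a n := by
    funext n; rw [xseq]; apply tsum_congr; intro i; congr 1; omega
  rwa [this] at h

lemma Da_subset_Icc (hpos : ∀ n ≥ 1, 0 < a n) (hsumm : Summable fun n => a (n + 1))
    (htot : ∑' n : ℕ, a (n + 1) = 1) : Da a ⊆ Icc 0 1 := by
  rintro y (rfl | ⟨k, hk, rfl⟩)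
  · exact ⟨le_rfl, zero_le_one⟩
  · exact ⟨xseq_nonneg hpos hsumm hk, xseq_le_one hpos hsumm htot hk⟩

lemma zero_mem_Da : (0:ℝ) ∈ Da a := Or.inl rfl

lemma xseq_mem_Da {k : ℕ} (hk : 1 ≤ k) : xseq a k ∈ Da a := Or.inr ⟨k, hk, rfl⟩

end Seq

section Cover

lemma coverNum_le_card {F : Set ℝ} {δ : ℝ} {S : Finset ℝ}
    (h : F ⊆ ⋃ x ∈ S, Metric.closedBall x δ) : coverNum F δ ≤ S.card :=
  Nat.sInf_le ⟨S, rfl, h⟩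

lemma grid_cover {F : Set ℝ} {δ : ℝ} (hδ : 0 < δ) (hF : F ⊆ Icc 0 1) :
    F ⊆ ⋃ x ∈ (Finset.range (⌈1/δ⌉₊ + 1)).image (fun j : ℕ => (j:ℝ) * δ),
      Metric.closedBall x δ := by
  intro y hy
  obtain ⟨hy0, hy1⟩ := hF hy
  simp only [Set.mem_iUnion, Finset.mem_image, Finset.mem_range]
  refine ⟨(⌊y/δ⌋₊ : ℝ) * δ, ⟨⌊y/δ⌋₊, ?_, rfl⟩, ?_⟩
  · have h2 : y/δ ≤ 1/δ := by gcongr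
    have h3 : ⌊y/δ⌋₊ ≤ ⌈1/δ⌉₊ := le_trans (Nat.floor_le_floor h2) (Nat.floor_le_ceil _)
    exact Nat.lt_succ_of_le h3
  · have h1 : (⌊y/δ⌋₊ : ℝ) * δ ≤ y := by
      rw [← le_div_iff₀ hδ]; exact Nat.floor_le (by positivity)
    have h2 : y < ((⌊y/δ⌋₊ : ℝ) + 1) * δ := by
      rw [← div_lt_iff₀ hδ]; exact Nat.lt_floor_add_one _
    rw [Metric.mem_closedBall, Real.dist_eq, abs_le]
    constructor <;> nlinarith

lemma exists_opt_cover {F : Set ℝ} {δ : ℝ} (hδ : 0 < δ) (hF : F ⊆ Icc 0 1) :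
    ∃ S : Finset ℝ, S.card = coverNum F δ ∧ F ⊆ ⋃ x ∈ S, Metric.closedBall x δ := by
  have hne : {n : ℕ | ∃ S : Finset ℝ, S.card = n ∧ F ⊆ ⋃ x ∈ S, Metric.closedBall x δ}.Nonempty :=
    ⟨_, _, rfl, grid_cover hδ hF⟩
  exact Nat.sInf_mem hne

lemma one_le_coverNum {F : Set ℝ} {δ : ℝ} (hδ : 0 < δ) (hF : F ⊆ Icc 0 1)
    (hne : F.Nonempty) : 1 ≤ coverNum F δ := by
  obtain ⟨S, hcard, hcov⟩ := exists_opt_cover hδ hF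
  rcases Nat.eq_zero_or_pos (coverNum F δ) with h | h
  · exfalso
    rw [h, Finset.card_eq_zero] at hcard
    obtain ⟨y, hy⟩ := hne
    have := hcov hy
    simp [hcard] at this
  · exact h

lemma coverNum_le_two_div {F : Set ℝ} {δ : ℝ} (hδ : 0 < δ) (hδ2 : δ ≤ 1/2)
    (hF : F ⊆ Icc 0 1) : (coverNum F δ : ℝ) ≤ 2/δ := by
  have h1 : coverNum F δ ≤ (Finset.range (⌈1/δ⌉₊ + 1)).card :=
    le_trans (coverNum_le_card (grid_cover hδ hF)) Finset.card_image_le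
  rw [Finset.card_range] at h1
  have h2 : (⌈1/δ⌉₊ : ℝ) < 1/δ + 1 := Nat.ceil_lt_add_one (by positivity)
  have h3 : (coverNum F δ : ℝ) ≤ (⌈1/δ⌉₊ : ℝ) + 1 := by exact_mod_cast h1
  have h4 : 2 ≤ 1/δ := by rw [le_div_iff₀ hδ]; linarith
  have h5 : (coverNum F δ : ℝ) ≤ 1/δ + 2 := by linarith
  calc (coverNum F δ : ℝ) ≤ 1/δ + 2 := h5
    _ ≤ 1/δ + 1/δ := by linarith
    _ = 2/δ := by ring

end Cover

section NhdsGT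

lemma eventually_nhdsGT_iff {P : ℝ → Prop} :
    (∀ᶠ δ in 𝓝[>](0:ℝ), P δ) ↔ ∃ ε > (0:ℝ), ∀ δ, 0 < δ → δ < ε → P δ := by
  constructor
  · intro h
    rw [eventually_nhdsWithin_iff, Metric.eventually_nhds_iff] at h
    obtain ⟨ε, hε, h⟩ := h
    refine ⟨ε, hε, fun δ h1 h2 => ?_⟩
    exact h (by rw [Real.dist_eq, sub_zero, abs_of_pos h1]; exact h2) h1
  · rintro ⟨ε, hε, h⟩
    have : Ioo (0:ℝ) ε ∈ 𝓝[>](0:ℝ) := Ioo_mem_nhdsGT_of_mem ⟨le_rfl, hε⟩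
    filter_upwards [this] with δ hδ
    exact h δ hδ.1 hδ.2

lemma frequently_nhdsGT_iff {P : ℝ → Prop} :
    (∃ᶠ δ in 𝓝[>](0:ℝ), P δ) ↔ ∀ ε > (0:ℝ), ∃ δ, 0 < δ ∧ δ < ε ∧ P δ := by
  constructor
  · intro h ε hε
    have hev : ∀ᶠ δ in 𝓝[>](0:ℝ), δ ∈ Ioo (0:ℝ) ε :=
      eventually_of_mem (Ioo_mem_nhdsGT_of_mem ⟨le_rfl, hε⟩) (fun x hx => hx)
    obtain ⟨δ, hP, hδ⟩ := (h.and_eventually hev).exists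
    exact ⟨δ, hδ.1, hδ.2, hP⟩
  · intro h
    rw [frequently_iff]
    intro U hU
    obtain ⟨u, hu, hsub⟩ := mem_nhdsGT_iff_exists_Ioo_subset.mp hU
    obtain ⟨δ, h1, h2, h3⟩ := h u hu
    exact ⟨δ, hsub ⟨h1, h2⟩, h3⟩

end NhdsGT

section Box
variable {F : Set ℝ}

lemma ev_bounds (hF : F ⊆ Icc 0 1) (hne : F.Nonempty) : ∀ᶠ δ in 𝓝[>](0:ℝ),
    0 ≤ Real.log (coverNum F δ) / -Real.log δ ∧
    Real.log (coverNum F δ) / -Real.log δ ≤ 2 := by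
  rw [eventually_nhdsGT_iff]
  refine ⟨1/2, by norm_num, fun δ h1 h2 => ?_⟩
  have hN1 : 1 ≤ coverNum F δ := one_le_coverNum h1 hF hne
  have hN1' : (1:ℝ) ≤ (coverNum F δ : ℝ) := by exact_mod_cast hN1
  have hlogδ : Real.log δ < 0 := Real.log_neg h1 (by linarith)
  have hpos : (0:ℝ) < -Real.log δ := by linarith
  constructor
  · exact div_nonneg (Real.log_nonneg hN1') (le_of_lt hpos)
  · rw [div_le_iff₀ hpos]
    have hN2 : (coverNum F δ : ℝ) ≤ 2/δ := coverNum_le_two_div h1 (by linarith) hF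
    have h3 : Real.log (coverNum F δ) ≤ Real.log (2/δ) :=
      Real.log_le_log (by linarith) hN2
    rw [Real.log_div (by norm_num) (ne_of_gt h1)] at h3
    have h4 : Real.log δ ≤ Real.log (1/2) := Real.log_le_log h1 h2.le
    rw [Real.log_div (by norm_num) (by norm_num), Real.log_one] at h4
    linarith

lemma zero_mem_A (hF : F ⊆ Icc 0 1) (hne : F.Nonempty) : (0:ℝ) ∈ {c : ℝ | ∀ᶠ δ in 𝓝[>](0:ℝ),
    c ≤ Real.log (coverNum F δ) / -Real.log δ} := by
  filter_upwards [ev_bounds hF hne] with δ h using h.1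

lemma bddAbove_A (hF : F ⊆ Icc 0 1) (hne : F.Nonempty) : BddAbove {c : ℝ | ∀ᶠ δ in 𝓝[>](0:ℝ),
    c ≤ Real.log (coverNum F δ) / -Real.log δ} := by
  refine ⟨2, fun c hc => ?_⟩
  simp only [Set.mem_setOf_eq] at hc
  obtain ⟨δ, h1, h2⟩ := (hc.and (ev_bounds hF hne)).exists
  linarith [h2.2]

lemma lowerBoxDim_eq_sSup : lowerBoxDim F = sSup {c : ℝ | ∀ᶠ δ in 𝓝[>](0:ℝ),
    c ≤ Real.log (coverNum F δ) / -Real.log δ} := by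
  rw [lowerBoxDim, liminf_eq]

lemma lowerBoxDim_nonneg (hF : F ⊆ Icc 0 1) (hne : F.Nonempty) : 0 ≤ lowerBoxDim F := by
  rw [lowerBoxDim_eq_sSup]
  exact le_csSup (bddAbove_A hF hne) (zero_mem_A hF hne)

lemma lowerBoxDim_le_of_ev (hF : F ⊆ Icc 0 1) (hne : F.Nonempty) {c : ℝ}
    (h : ∀ᶠ δ in 𝓝[>](0:ℝ), Real.log (coverNum F δ) / -Real.log δ ≤ c) :
    lowerBoxDim F ≤ c := by
  rw [lowerBoxDim_eq_sSup]
  apply csSup_le ⟨0, zero_mem_A hF hne⟩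
  intro x hx
  simp only [Set.mem_setOf_eq] at hx
  obtain ⟨δ, h1, h2⟩ := (hx.and h).exists
  linarith

lemma lowerBoxDim_le_one (hF : F ⊆ Icc 0 1) (hne : F.Nonempty) : lowerBoxDim F ≤ 1 := by
  apply le_of_forall_pos_le_add
  intro η hη
  apply lowerBoxDim_le_of_ev hF hne
  rw [eventually_nhdsGT_iff]
  refine ⟨min (1/2) (Real.exp (-(Real.log 2 / η))), by positivity, fun δ h1 h2 => ?_⟩
  have h2a : δ < 1/2 := lt_of_lt_of_le h2 (min_le_left _ _)
  have h2b : δ < Real.exp (-(Real.log 2 / η)) := lt_of_lt_of_le h2 (min_le_right _ _)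
  have hlogδ : Real.log δ < 0 := Real.log_neg h1 (by linarith)
  have hpos : (0:ℝ) < -Real.log δ := by linarith
  rw [div_le_iff₀ hpos]
  have hN2 : (coverNum F δ : ℝ) ≤ 2/δ := coverNum_le_two_div h1 (by linarith) hF
  have hN1 : (1:ℝ) ≤ (coverNum F δ : ℝ) := by
    exact_mod_cast one_le_coverNum h1 hF hne
  have h3 : Real.log (coverNum F δ) ≤ Real.log 2 - Real.log δ := by
    have := Real.log_le_log (by linarith) hN2
    rwa [Real.log_div (by norm_num) (ne_of_gt h1)] at this
  have h4 : Real.log δ < -(Real.log 2 / η) := by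
    calc Real.log δ < Real.log (Real.exp (-(Real.log 2 / η))) :=
      Real.log_lt_log h1 h2b
    _ = -(Real.log 2 / η) := Real.log_exp _
  have h5 : Real.log 2 ≤ η * (-Real.log δ) := by
    rw [← sub_nonneg]
    have : Real.log 2 / η < -Real.log δ := by linarith
    have := mul_lt_mul_of_pos_left this hη
    rw [mul_div_cancel₀] at this
    · linarith
    · exact ne_of_gt hη
  linarith [h3, h5]

lemma ev_coverNum_gt (hF : F ⊆ Icc 0 1) (hne : F.Nonempty) {η : ℝ} (hη : 0 < η) :
    ∀ᶠ δ in 𝓝[>](0:ℝ), δ ^ (-(lowerBoxDim F - η)) < (coverNum F δ : ℝ) := by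
  have hlt : lowerBoxDim F - η < sSup {c : ℝ | ∀ᶠ δ in 𝓝[>](0:ℝ),
      c ≤ Real.log (coverNum F δ) / -Real.log δ} := by
    rw [← lowerBoxDim_eq_sSup]; linarith
  obtain ⟨c, hc, hbc⟩ := exists_lt_of_lt_csSup ⟨0, zero_mem_A hF hne⟩ hlt
  simp only [Set.mem_setOf_eq] at hc
  have hδ1 : ∀ᶠ δ in 𝓝[>](0:ℝ), 0 < δ ∧ δ < 1 := by
    rw [eventually_nhdsGT_iff]
    exact ⟨1, one_pos, fun δ h1 h2 => ⟨h1, h2⟩⟩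
  filter_upwards [hc, hδ1] with δ hgc hδ
  obtain ⟨h1, h2⟩ := hδ
  have hlogδ : Real.log δ < 0 := Real.log_neg h1 h2
  have hpos : (0:ℝ) < -Real.log δ := by linarith
  have hN1 : (1:ℝ) ≤ (coverNum F δ : ℝ) := by
    exact_mod_cast one_le_coverNum h1 hF hne
  have hg : lowerBoxDim F - η < Real.log (coverNum F δ) / -Real.log δ :=
    lt_of_lt_of_le hbc hgc
  have h3 : (lowerBoxDim F - η) * (-Real.log δ) < Real.log (coverNum F δ) :=
    (lt_div_iff₀ hpos).mp hg
  have h4 : δ ^ (-(lowerBoxDim F - η)) = Real.exp ((lowerBoxDim F - η) * (-Real.log δ)) := by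
    rw [Real.rpow_def_of_pos h1]; ring_nf
  rw [h4]
  calc Real.exp ((lowerBoxDim F - η) * (-Real.log δ)) <
      Real.exp (Real.log (coverNum F δ)) := Real.exp_lt_exp.mpr h3
    _ = (coverNum F δ : ℝ) := Real.exp_log (by linarith)

lemma freq_coverNum_lt (hF : F ⊆ Icc 0 1) (hne : F.Nonempty) {η : ℝ} (hη : 0 < η) :
    ∃ᶠ δ in 𝓝[>](0:ℝ), (coverNum F δ : ℝ) < δ ^ (-(lowerBoxDim F + η)) := by
  have hfreq : ∃ᶠ δ in 𝓝[>](0:ℝ),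
      Real.log (coverNum F δ) / -Real.log δ < lowerBoxDim F + η := by
    by_contra hcon
    rw [Filter.not_frequently] at hcon
    have hmem : lowerBoxDim F + η ∈ {c : ℝ | ∀ᶠ δ in 𝓝[>](0:ℝ),
        c ≤ Real.log (coverNum F δ) / -Real.log δ} := by
      filter_upwards [hcon] with δ h
      push_neg at h
      exact h
    have := le_csSup (bddAbove_A hF hne) hmem
    rw [← lowerBoxDim_eq_sSup] at this
    linarith
  have hδ1 : ∀ᶠ δ in 𝓝[>](0:ℝ), 0 < δ ∧ δ < 1 := by
    rw [eventually_nhdsGT_iff]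
    exact ⟨1, one_pos, fun δ h1 h2 => ⟨h1, h2⟩⟩
  apply Filter.Frequently.mono (hfreq.and_eventually hδ1)
  rintro δ ⟨hg, h1, h2⟩
  have hlogδ : Real.log δ < 0 := Real.log_neg h1 h2
  have hpos : (0:ℝ) < -Real.log δ := by linarith
  have hN1 : (1:ℝ) ≤ (coverNum F δ : ℝ) := by
    exact_mod_cast one_le_coverNum h1 hF hne
  have h3 : Real.log (coverNum F δ) < (lowerBoxDim F + η) * (-Real.log δ) :=
    (div_lt_iff₀ hpos).mp hg
  have h4 : δ ^ (-(lowerBoxDim F + η)) = Real.exp ((lowerBoxDim F + η) * (-Real.log δ)) := by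
    rw [Real.rpow_def_of_pos h1]; ring_nf
  rw [h4]
  calc (coverNum F δ : ℝ) = Real.exp (Real.log (coverNum F δ)) :=
      (Real.exp_log (by linarith)).symm
    _ < Real.exp ((lowerBoxDim F + η) * (-Real.log δ)) := Real.exp_lt_exp.mpr h3

end Box

section Geom
variable {a : ℕ → ℝ}

/-- index of first gap of size ≤ 2ρ -/
noncomputable def Kidx (a : ℕ → ℝ) (ρ : ℝ) : ℕ := sInf {k : ℕ | 1 ≤ k ∧ a k ≤ 2 * ρ}

lemma Kidx_spec (hpos : ∀ n ≥ 1, 0 < a n) (hsumm : Summable fun n => a (n + 1))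
    {ρ : ℝ} (hρ : 0 < ρ) : 1 ≤ Kidx a ρ ∧ a (Kidx a ρ) ≤ 2 * ρ := by
  have hne : {k : ℕ | 1 ≤ k ∧ a k ≤ 2 * ρ}.Nonempty := by
    have h1 : ∀ᶠ n in atTop, xseq a n < 2 * ρ :=
      xseq_tendsto.eventually (gt_mem_nhds (by linarith))
    obtain ⟨n, hn1, hn2⟩ := (h1.and (eventually_ge_atTop 1)).exists
    exact ⟨n, hn2, le_of_lt (lt_of_le_of_lt (a_le_xseq hpos hsumm hn2) hn1)⟩
  exact Nat.sInf_mem hne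

lemma Kidx_min {ρ : ℝ} {m : ℕ} (hm : 1 ≤ m) (hmK : m < Kidx a ρ) : 2 * ρ < a m := by
  by_contra h
  push_neg at h
  have : Kidx a ρ ≤ m :=
    Nat.sInf_le (show m ∈ {k : ℕ | 1 ≤ k ∧ a k ≤ 2 * ρ} from ⟨hm, h⟩)
  omega

lemma sep_bound (hpos : ∀ n ≥ 1, 0 < a n) (hmono : ∀ n ≥ 1, a (n + 1) ≤ a n)
    (hsumm : Summable fun n => a (n + 1)) (htot : ∑' n : ℕ, a (n + 1) = 1)
    {ρ : ℝ} (hρ : 0 < ρ) : Kidx a ρ ≤ coverNum (Da a) ρ := by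
  classical
  obtain ⟨S, hcard, hcov⟩ := exists_opt_cover hρ (Da_subset_Icc hpos hsumm htot)
  set K := Kidx a ρ with hK
  have hsel : ∀ k, 1 ≤ k → ∃ c ∈ S, dist (xseq a k) c ≤ ρ := by
    intro k hk
    have := hcov (xseq_mem_Da hk)
    simp only [Set.mem_iUnion, Metric.mem_closedBall, exists_prop] at this
    exact this
  choose! f hfS hfd using hsel
  have hmaps : ∀ k ∈ Finset.Icc 1 K, f k ∈ S := fun k hk =>
    hfS k (Finset.mem_Icc.mp hk).1
  have hgap : ∀ k l, 1 ≤ k → k < l → l ≤ K → 2 * ρ < xseq a k - xseq a l := by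
    intro k l hk hkl hlK
    have hl1 : 1 ≤ l - 1 := by omega
    have h1 : xseq a (l - 1) = a (l - 1) + xseq a l := by
      have := xseq_succ hsumm hl1
      rwa [show l - 1 + 1 = l by omega] at this
    have h2 : xseq a (l - 1) ≤ xseq a k := xseq_anti hpos hsumm hk (by omega)
    have h3 : 2 * ρ < a (l - 1) := Kidx_min hl1 (by omega)
    linarith
  have hinj : Set.InjOn f (Finset.Icc 1 K) := by
    intro k hk l hl hfkl
    simp only [Finset.coe_Icc, Set.mem_Icc] at hk hl
    by_contra hne
    rcases Nat.lt_or_ge k l with h | h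
    · have hg := hgap k l hk.1 h hl.2
      have d1 := hfd k hk.1
      have d2 := hfd l hl.1
      rw [hfkl] at d1
      have := dist_triangle (xseq a k) (f l) (xseq a l)
      rw [dist_comm (f l) (xseq a l)] at this
      have heq : dist (xseq a k) (xseq a l) = xseq a k - xseq a l := by
        rw [Real.dist_eq, abs_of_nonneg (by linarith)]
      linarith
    · have hlk : l < k := by omega
      have hg := hgap l k hl.1 hlk hk.2
      have d1 := hfd k hk.1
      have d2 := hfd l hl.1
      rw [hfkl] at d1
      have := dist_triangle (xseq a l) (f l) (xseq a k)
      rw [dist_comm (f l) (xseq a k)] at this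
      have heq : dist (xseq a l) (xseq a k) = xseq a l - xseq a k := by
        rw [Real.dist_eq, abs_of_nonneg (by linarith)]
      linarith
  have hcard2 : (Finset.Icc 1 K).card ≤ S.card :=
    Finset.card_le_card_of_injOn f hmaps hinj
  rw [Nat.card_Icc] at hcard2
  omega

lemma len_bound (hpos : ∀ n ≥ 1, 0 < a n) (hmono : ∀ n ≥ 1, a (n + 1) ≤ a n)
    (hsumm : Summable fun n => a (n + 1)) (htot : ∑' n : ℕ, a (n + 1) = 1)
    {ρ : ℝ} (hρ : 0 < ρ) :
    xseq a (Kidx a ρ) ≤ 6 * ρ * (coverNum (Da a) ρ) := by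
  classical
  obtain ⟨S, hcard, hcov⟩ := exists_opt_cover hρ (Da_subset_Icc hpos hsumm htot)
  set K := Kidx a ρ with hKdef
  obtain ⟨hK1, hKa⟩ := Kidx_spec hpos hsumm (a := a) hρ
  have hsub : Icc (0:ℝ) (xseq a K) ⊆ ⋃ c ∈ S, Metric.closedBall c (3 * ρ) := by
    rintro y ⟨hy0, hyK⟩
    rcases eq_or_lt_of_le hy0 with rfl | hy
    · have := hcov zero_mem_Da
      simp only [Set.mem_iUnion, Metric.mem_closedBall, exists_prop] at this ⊢
      obtain ⟨c, hc, hd⟩ := this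
      exact ⟨c, hc, by linarith⟩
    · have hex : ∃ n, xseq a (n + 1) < y := by
        have h1 : ∀ᶠ n in atTop, xseq a n < y := xseq_tendsto.eventually (gt_mem_nhds hy)
        obtain ⟨n, hn1, hn2⟩ := (h1.and (eventually_ge_atTop 1)).exists
        refine ⟨n - 1, ?_⟩
        rwa [show n - 1 + 1 = n by omega]
      set j := Nat.find hex with hjdef
      have hj : xseq a (j + 1) < y := Nat.find_spec hex
      have hjK : K ≤ j := by
        by_contra hcon
        push_neg at hcon
        have : xseq a K ≤ xseq a (j + 1) := xseq_anti hpos hsumm (by omega) (by omega)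
        linarith
      have hj1 : 1 ≤ j := by omega
      have hyle : y ≤ xseq a j := by
        have hmin := Nat.find_min hex (show j - 1 < j by omega)
        push_neg at hmin
        rwa [show j - 1 + 1 = j by omega] at hmin
      have hxj : xseq a j = a j + xseq a (j + 1) := xseq_succ hsumm hj1
      have haj : a j ≤ a K := a_mono' hmono hK1 hjK
      have hdyx : dist y (xseq a j) ≤ 2 * ρ := by
        rw [Real.dist_eq, abs_of_nonpos (by linarith)]
        linarith
      have := hcov (xseq_mem_Da hj1)
      simp only [Set.mem_iUnion, Metric.mem_closedBall, exists_prop] at this ⊢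
      obtain ⟨c, hc, hd⟩ := this
      refine ⟨c, hc, ?_⟩
      calc dist y c ≤ dist y (xseq a j) + dist (xseq a j) c := dist_triangle _ _ _
        _ ≤ 2 * ρ + ρ := by linarith
        _ ≤ 3 * ρ := by linarith
  have hμ1 : MeasureTheory.volume (Icc (0:ℝ) (xseq a K)) ≤
      ∑ c ∈ S, MeasureTheory.volume (Metric.closedBall c (3 * ρ)) :=
    le_trans (MeasureTheory.measure_mono hsub) (MeasureTheory.measure_biUnion_finset_le _ _)
  rw [Real.volume_Icc] at hμ1
  have hμ2 : ∑ c ∈ S, MeasureTheory.volume (Metric.closedBall c (3 * ρ)) =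
      (S.card : ENNReal) * ENNReal.ofReal (6 * ρ) := by
    have hc : ∀ c ∈ S, MeasureTheory.volume (Metric.closedBall c (3 * ρ)) =
        ENNReal.ofReal (6 * ρ) := by
      intro c _
      rw [Real.volume_closedBall]
      congr 1
      ring
    rw [Finset.sum_congr rfl hc, Finset.sum_const, nsmul_eq_mul]
  rw [hμ2, hcard] at hμ1
  have hμ3 : ENNReal.ofReal ((coverNum (Da a) ρ : ℝ) * (6 * ρ)) =
      (↑(coverNum (Da a) ρ) : ENNReal) * ENNReal.ofReal (6 * ρ) := by
    rw [ENNReal.ofReal_mul (by positivity), ENNReal.ofReal_natCast]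
  rw [← hμ3] at hμ1
  have := (ENNReal.ofReal_le_ofReal_iff (by positivity)).mp hμ1
  linarith

end Geom

lemma coverNum_le_sum_of_cover {F : Set ℝ} {ρ : ℝ} (hρ : 0 < ρ) (I : Finset ℕ)
    (U : ℕ → Set ℝ) (hcov : F ⊆ ⋃ i ∈ I, U i)
    (hpos : ∀ i ∈ I, 0 < Metric.diam (U i)) :
    (coverNum F ρ : ℝ) ≤ ∑ i ∈ I, (Metric.diam (U i) / ρ + 1) := by
  classical
  set z : ℕ → ℝ := fun i => if h : (U i).Nonempty then h.some else 0 with hz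
  set S : Finset ℝ := I.biUnion (fun i =>
    (Finset.range (⌊Metric.diam (U i) / ρ⌋₊ + 1)).image
      (fun j : ℕ => z i - Metric.diam (U i) + ρ + 2 * ρ * (j:ℝ))) with hS
  have hcov' : F ⊆ ⋃ c ∈ S, Metric.closedBall c ρ := by
    intro y hy
    obtain ⟨i, hiI, hyU⟩ := by
      have := hcov hy
      simpa only [Set.mem_iUnion, exists_prop] using this
    have hne : (U i).Nonempty := ⟨y, hyU⟩
    have hzU : z i ∈ U i := by
      rw [hz]; simp only [dif_pos hne]; exact hne.some_mem
    have hbdd : Bornology.IsBounded (U i) := by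
      by_contra hub
      exact absurd (Metric.diam_eq_zero_of_unbounded hub) (ne_of_gt (hpos i hiI))
    set d := Metric.diam (U i) with hd
    have hdy : dist y (z i) ≤ d := Metric.dist_le_diam_of_mem hbdd hyU hzU
    have hyl : z i - d ≤ y := by
      have := abs_le.mp (by rwa [Real.dist_eq] at hdy)
      linarith [this.2]
    have hyu : y ≤ z i + d := by
      have := abs_le.mp (by rwa [Real.dist_eq] at hdy)
      linarith [this.1]
    set t := y - (z i - d) with ht
    have ht0 : 0 ≤ t := by simp [ht]; linarith
    have ht2 : t ≤ 2 * d := by simp [ht]; linarith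
    set j := ⌊t / (2 * ρ)⌋₊ with hj
    have hjm : j < ⌊d / ρ⌋₊ + 1 := by
      have h1 : t / (2 * ρ) ≤ d / ρ := by
        rw [div_le_div_iff₀ (by linarith) hρ]
        nlinarith
      have := Nat.floor_le_floor h1
      omega
    have hjle : (j : ℝ) * (2 * ρ) ≤ t := by
      rw [← le_div_iff₀ (by linarith : (0:ℝ) < 2 * ρ)]
      exact Nat.floor_le (by positivity)
    have hjlt : t < ((j : ℝ) + 1) * (2 * ρ) := by
      rw [← div_lt_iff₀ (by linarith : (0:ℝ) < 2 * ρ)]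
      exact Nat.lt_floor_add_one _
    simp only [Set.mem_iUnion, exists_prop]
    refine ⟨z i - d + ρ + 2 * ρ * (j:ℝ), ?_, ?_⟩
    · rw [hS]
      refine Finset.mem_biUnion.mpr ⟨i, hiI, ?_⟩
      exact Finset.mem_image.mpr ⟨j, Finset.mem_range.mpr hjm, rfl⟩
    · rw [Metric.mem_closedBall, Real.dist_eq, abs_le]
      constructor
      · nlinarith
      · nlinarith
  have hcard : (S.card : ℝ) ≤ ∑ i ∈ I, (Metric.diam (U i) / ρ + 1) := by
    have h1 : S.card ≤ ∑ i ∈ I, (⌊Metric.diam (U i) / ρ⌋₊ + 1) := by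
      rw [hS]
      refine le_trans (Finset.card_biUnion_le) ?_
      exact Finset.sum_le_sum fun i _ =>
        le_trans Finset.card_image_le (by rw [Finset.card_range])
    have h2 : ((∑ i ∈ I, (⌊Metric.diam (U i) / ρ⌋₊ + 1) : ℕ) : ℝ) ≤
        ∑ i ∈ I, (Metric.diam (U i) / ρ + 1) := by
      push_cast
      refine Finset.sum_le_sum fun i hi => ?_
      have : (⌊Metric.diam (U i) / ρ⌋₊ : ℝ) ≤ Metric.diam (U i) / ρ :=
        Nat.floor_le (by positivity)
      linarith
    calc (S.card : ℝ) ≤ _ := by exact_mod_cast h1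
      _ ≤ _ := h2
  calc (coverNum F ρ : ℝ) ≤ (S.card : ℝ) := by exact_mod_cast coverNum_le_card hcov'
    _ ≤ _ := hcard

set_option maxHeartbeats 1000000 in
lemma lower_dir {F : Set ℝ} (hF : F ⊆ Icc 0 1) (hne : F.Nonempty)
    {θ s : ℝ} (hθ0 : 0 < θ) (hθ1 : θ ≤ 1) (hs0 : 0 ≤ s)
    (hmem : ∀ ε > (0:ℝ), ∀ δ₀ > (0:ℝ), ∃ δ : ℝ, 0 < δ ∧ δ ≤ δ₀ ∧
      ∃ (I : Finset ℕ) (U : ℕ → Set ℝ), (F ⊆ ⋃ i ∈ I, U i) ∧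
        (∀ i ∈ I, δ ^ (1 / θ) ≤ Metric.diam (U i) ∧ Metric.diam (U i) ≤ δ) ∧
        ∑ i ∈ I, Metric.diam (U i) ^ s ≤ ε) :
    θ * lowerBoxDim F / (1 - (1 - θ) * lowerBoxDim F) ≤ s := by
  set b := lowerBoxDim F with hbdef
  have hb0 : 0 ≤ b := lowerBoxDim_nonneg hF hne
  have hb1 : b ≤ 1 := lowerBoxDim_le_one hF hne
  have hden : 0 < 1 - (1 - θ) * b := by
    have h := mul_nonneg (sub_nonneg.mpr hθ1) (sub_nonneg.mpr hb1)
    nlinarith only [h, hθ0]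
  by_contra hcon
  push_neg at hcon
  have hP0 : s * (1 - (1 - θ) * b) < θ * b := by
    rw [lt_div_iff₀ hden] at hcon
    linarith
  have hbpos : 0 < b := by
    have h1 : 0 < θ * b := by nlinarith only [hP0, hs0, hden, mul_nonneg hs0 hden.le]
    nlinarith only [h1, hθ0, hb0]
  set h0v := θ * b - s * (1 - (1 - θ) * b) with hh0v
  have hh0 : 0 < h0v := by rw [hh0v]; linarith
  set c₀ := θ + s * (1 - θ) with hc₀def
  have hc₀ : 0 < c₀ := by nlinarith
  clear_value h0v c₀
  set η := min (b / 2) (h0v / (2 * c₀)) with hηdef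
  have hηpos : 0 < η := lt_min (by linarith) (by positivity)
  set bt := b - η with hbtdef
  have hbt0 : 0 < bt := by
    have : η ≤ b / 2 := min_le_left _ _
    rw [hbtdef]; linarith
  have hbtb : bt < b := by rw [hbtdef]; linarith
  have hbt1 : bt < 1 := lt_of_lt_of_le hbtb hb1
  have hP1 : s * (1 - (1 - θ) * bt) < θ * bt := by
    have h1 : η ≤ h0v / (2 * c₀) := min_le_right _ _
    have h2 : η * c₀ ≤ h0v / 2 := by
      rw [le_div_iff₀ (by positivity : (0:ℝ) < 2 * c₀)] at h1
      nlinarith only [h1]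
    have hexp : θ * bt - s * (1 - (1 - θ) * bt) = h0v - η * c₀ := by
      rw [hbtdef, hh0v, hc₀def]; ring
    have h9 : h0v / 2 ≤ h0v - η * c₀ := by linarith only [h2]
    have h10 : 0 < θ * bt - s * (1 - (1 - θ) * bt) := by
      rw [hexp]; linarith only [h9, hh0]
    linarith only [h10]
  have hden2 : θ ≤ 1 - (1 - θ) * bt := by
    have h := mul_nonneg (sub_nonneg.mpr hθ1) (by linarith : (0:ℝ) ≤ 1 - bt)
    nlinarith only [h]
  have hsb : s < bt := by
    have h1 : θ * bt ≤ (1 - (1 - θ) * bt) * bt :=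
      mul_le_mul_of_nonneg_right hden2 hbt0.le
    have h2 : s * (1 - (1 - θ) * bt) < (1 - (1 - θ) * bt) * bt := by
      nlinarith only [hP1, h1]
    have h3 : 0 < 1 - (1 - θ) * bt := by linarith
    nlinarith only [h2, h3, mul_pos h3 h3]
  have hs1 : s < 1 := lt_trans hsb hbt1
  set α := (1 - s) / (1 - bt) with hαdef
  have h1bt : 0 < 1 - bt := by linarith
  have hαval : α * (1 - bt) = 1 - s := by rw [hαdef]; field_simp
  have hα1 : 1 ≤ α := by
    rw [hαdef, le_div_iff₀ h1bt]; linarith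
  have hbteq : lowerBoxDim F - η = bt := by rw [hbtdef, hbdef]
  clear_value η bt α
  -- get the eventual lower bound on covering numbers
  obtain ⟨δ₁, hδ₁pos, hev⟩ := eventually_nhdsGT_iff.mp (ev_coverNum_gt hF hne hηpos)
  obtain ⟨δ, hδpos, hδle, I, U, hcov, hsize, hsum⟩ :=
    hmem (1/2) (by norm_num) (min (1/2) (δ₁/2)) (by positivity)
  have hδhalf : δ ≤ 1/2 := le_trans hδle (min_le_left _ _)
  have hδ1' : δ < δ₁ := lt_of_le_of_lt (le_trans hδle (min_le_right _ _)) (by linarith)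
  have hδle1 : δ ≤ 1 := by linarith
  set ρ := δ ^ α with hρdef
  have hρpos : 0 < ρ := Real.rpow_pos_of_pos hδpos _
  have hρδ : ρ ≤ δ := by
    rw [hρdef]
    calc δ ^ α ≤ δ ^ (1:ℝ) := Real.rpow_le_rpow_of_exponent_ge hδpos hδle1 hα1
      _ = δ := Real.rpow_one δ
  have hρδ₁ : ρ < δ₁ := lt_of_le_of_lt hρδ hδ1'
  have hN : ρ ^ (-bt) < (coverNum F ρ : ℝ) := by
    have := hev ρ hρpos hρδ₁
    rwa [hbteq] at this
  have hτpos : 0 < δ ^ (1/θ : ℝ) := Real.rpow_pos_of_pos hδpos _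
  have hdpos : ∀ i ∈ I, 0 < Metric.diam (U i) := fun i hi =>
    lt_of_lt_of_le hτpos (hsize i hi).1
  have hNle := coverNum_le_sum_of_cover hρpos I U hcov hdpos
  -- sum of diameters bound
  have hsumd : ∑ i ∈ I, Metric.diam (U i) ≤ δ ^ (1 - s) * (1/2) := by
    have h1 : ∀ i ∈ I, Metric.diam (U i) ≤ δ ^ (1 - s) * Metric.diam (U i) ^ s := by
      intro i hi
      have hd0 := hdpos i hi
      have hds : Metric.diam (U i) = Metric.diam (U i) ^ (1 - s) * Metric.diam (U i) ^ s := by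
        rw [← Real.rpow_add hd0, show (1:ℝ) - s + s = 1 by ring, Real.rpow_one]
      have h2 : Metric.diam (U i) ^ (1 - s) ≤ δ ^ (1 - s) :=
        Real.rpow_le_rpow hd0.le (hsize i hi).2 (by linarith)
      have h3 : (0:ℝ) ≤ Metric.diam (U i) ^ s := Real.rpow_nonneg hd0.le s
      calc Metric.diam (U i) = Metric.diam (U i) ^ (1 - s) * Metric.diam (U i) ^ s := hds
        _ ≤ δ ^ (1 - s) * Metric.diam (U i) ^ s := mul_le_mul_of_nonneg_right h2 h3
    calc ∑ i ∈ I, Metric.diam (U i) ≤ ∑ i ∈ I, δ ^ (1 - s) * Metric.diam (U i) ^ s :=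
        Finset.sum_le_sum h1
      _ = δ ^ (1 - s) * ∑ i ∈ I, Metric.diam (U i) ^ s := by rw [Finset.mul_sum]
      _ ≤ δ ^ (1 - s) * (1/2) := by
          exact mul_le_mul_of_nonneg_left hsum (Real.rpow_nonneg hδpos.le (1 - s))
  -- cardinality bound
  have hcard : (I.card : ℝ) ≤ (1/2) * δ ^ (-(s/θ)) := by
    have h1 : (I.card : ℝ) * δ ^ ((s/θ : ℝ)) ≤ ∑ i ∈ I, Metric.diam (U i) ^ s := by
      have h2 : ∀ i ∈ I, δ ^ ((s/θ : ℝ)) ≤ Metric.diam (U i) ^ s := by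
        intro i hi
        have : (δ ^ (1/θ : ℝ)) ^ s ≤ Metric.diam (U i) ^ s :=
          Real.rpow_le_rpow hτpos.le (hsize i hi).1 hs0
        rwa [← Real.rpow_mul hδpos.le, show (1/θ) * s = s/θ by ring] at this
      calc (I.card : ℝ) * δ ^ ((s/θ : ℝ)) = ∑ _i ∈ I, δ ^ ((s/θ : ℝ)) := by
            rw [Finset.sum_const, nsmul_eq_mul]
        _ ≤ _ := Finset.sum_le_sum h2
    have h3 : (0:ℝ) < δ ^ ((s/θ : ℝ)) := Real.rpow_pos_of_pos hδpos _
    have h4 : (I.card : ℝ) * δ ^ ((s/θ : ℝ)) ≤ 1/2 := le_trans h1 hsum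
    rw [Real.rpow_neg hδpos.le]
    calc (I.card : ℝ) ≤ (1/2) / δ ^ ((s/θ : ℝ)) := (le_div_iff₀ h3).mpr h4
      _ = (1/2) * (δ ^ ((s/θ : ℝ)))⁻¹ := by ring
  -- key rpow identities
  have hid1 : δ ^ (1 - s) / ρ = δ ^ (-(α * bt)) := by
    rw [hρdef, ← Real.rpow_sub hδpos]
    congr 1
    nlinarith only [hαval]
  have hkey : s / θ ≤ α * bt := by
    rw [div_le_iff₀ hθ0]
    have h7 : s * (1 - bt) < θ * bt * (1 - s) := by nlinarith only [hP1]
    have h8 : s * (1 - bt) ≤ (α * bt * θ) * (1 - bt) := by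
      rw [show (α * bt * θ) * (1 - bt) = θ * bt * (α * (1 - bt)) by ring, hαval]
      linarith only [h7]
    exact le_of_mul_le_mul_right h8 h1bt
  have hid2 : δ ^ (-(s/θ)) ≤ δ ^ (-(α * bt)) :=
    Real.rpow_le_rpow_of_exponent_ge hδpos hδle1 (by linarith)
  have hidρ : ρ ^ (-bt) = δ ^ (-(α * bt)) := by
    rw [hρdef, ← Real.rpow_mul hδpos.le]
    congr 1
    ring
  -- combine
  have hfinal : (coverNum F ρ : ℝ) ≤ δ ^ (-(α * bt)) := by
    have h1 : ∑ i ∈ I, (Metric.diam (U i) / ρ + 1) =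
        (∑ i ∈ I, Metric.diam (U i)) / ρ + I.card := by
      rw [Finset.sum_add_distrib, Finset.sum_div]
      simp
    have h2 : (∑ i ∈ I, Metric.diam (U i)) / ρ ≤ (1/2) * δ ^ (-(α * bt)) := by
      calc (∑ i ∈ I, Metric.diam (U i)) / ρ ≤ (δ ^ (1 - s) * (1/2)) / ρ := by gcongr
        _ = (1/2) * (δ ^ (1 - s) / ρ) := by ring
        _ = (1/2) * δ ^ (-(α * bt)) := by rw [hid1]
    have h3 : (I.card : ℝ) ≤ (1/2) * δ ^ (-(α * bt)) := by
      calc (I.card : ℝ) ≤ (1/2) * δ ^ (-(s/θ)) := hcard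
        _ ≤ (1/2) * δ ^ (-(α * bt)) := by linarith only [hid2]
    calc (coverNum F ρ : ℝ) ≤ ∑ i ∈ I, (Metric.diam (U i) / ρ + 1) := hNle
      _ = (∑ i ∈ I, Metric.diam (U i)) / ρ + I.card := h1
      _ ≤ (1/2) * δ ^ (-(α * bt)) + (1/2) * δ ^ (-(α * bt)) := by linarith only [h2, h3]
      _ = δ ^ (-(α * bt)) := by ring
  rw [hidρ] at hN
  linarith only [hN, hfinal]

set_option maxHeartbeats 1000000 in
lemma upper_dir {a : ℕ → ℝ} (hpos : ∀ n ≥ 1, 0 < a n) (hmono : ∀ n ≥ 1, a (n + 1) ≤ a n)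
    (hsumm : Summable fun n => a (n + 1)) (htot : ∑' n : ℕ, a (n + 1) = 1)
    {θ s : ℝ} (hθ0 : 0 < θ) (hθ1 : θ ≤ 1)
    (hs : θ * lowerBoxDim (Da a) / (1 - (1 - θ) * lowerBoxDim (Da a)) < s) :
    ∀ ε > (0:ℝ), ∀ δ₀ > (0:ℝ), ∃ δ : ℝ, 0 < δ ∧ δ ≤ δ₀ ∧
      ∃ (I : Finset ℕ) (U : ℕ → Set ℝ), (Da a ⊆ ⋃ i ∈ I, U i) ∧
        (∀ i ∈ I, δ ^ (1 / θ) ≤ Metric.diam (U i) ∧ Metric.diam (U i) ≤ δ) ∧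
        ∑ i ∈ I, Metric.diam (U i) ^ s ≤ ε := by
  classical
  intro ε hε δ₀ hδ₀
  have hF := Da_subset_Icc hpos hsumm htot
  have hne : (Da a).Nonempty := ⟨0, zero_mem_Da⟩
  set b := lowerBoxDim (Da a) with hbdef
  have hb0 : 0 ≤ b := lowerBoxDim_nonneg hF hne
  have hb1 : b ≤ 1 := lowerBoxDim_le_one hF hne
  have hden : 0 < 1 - (1 - θ) * b := by nlinarith
  have hsf : θ * b < s * (1 - (1 - θ) * b) := by
    rw [div_lt_iff₀ hden] at hs
    linarith
  have hspos : 0 < s := by nlinarith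
  set h0v := s * (1 - (1 - θ) * b) - θ * b with hh0v
  have hh0 : 0 < h0v := by rw [hh0v]; linarith
  set c₀ := θ + s * (1 - θ) with hc₀def
  have hc₀ : 0 < c₀ := by nlinarith
  set η := min (θ/2) (h0v / (2 * c₀)) with hηdef
  have hηpos : 0 < η := lt_min (by linarith) (by positivity)
  set bh := b + η with hbhdef
  have hbh0 : 0 < bh := by rw [hbhdef]; linarith
  set c := 1 - (1 - θ) * bh with hcdef
  have hcpos : 0 < c := by
    have h1 : η ≤ θ/2 := min_le_left _ _
    rw [hcdef, hbhdef]
    nlinarith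
  have hcle1 : c ≤ 1 := by
    rw [hcdef]
    nlinarith
  have hP1 : θ * bh < s * c := by
    have h1 : η ≤ h0v / (2 * c₀) := min_le_right _ _
    have h2 : η * c₀ ≤ h0v / 2 := by
      rw [le_div_iff₀ (by positivity : (0:ℝ) < 2 * c₀)] at h1
      nlinarith
    have hexp : s * c - θ * bh = h0v - η * c₀ := by
      rw [hcdef, hbhdef, hh0v, hc₀def]; ring
    nlinarith
  set e₁ := s * c / θ - bh with he₁def
  set e₂ := s * c - θ * bh with he₂def
  set e₃ := c * s with he₃def
  have he₁ : 0 < e₁ := by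
    rw [he₁def]
    rw [sub_pos, lt_div_iff₀ hθ0]
    linarith
  have he₂ : 0 < e₂ := by rw [he₂def]; linarith
  have he₃ : 0 < e₃ := by rw [he₃def]; positivity
  -- choose a good scale ρ
  set ρ₀ := min (min (δ₀ ^ (1/c : ℝ)) (1/2))
    (min ((ε/3) ^ (1/e₁ : ℝ)) (min ((ε/18) ^ (1/e₂ : ℝ)) ((ε/3) ^ (1/e₃ : ℝ)))) with hρ₀def
  have hρ₀pos : 0 < ρ₀ := by
    apply lt_min
    · exact lt_min (Real.rpow_pos_of_pos hδ₀ _) (by norm_num)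
    · exact lt_min (Real.rpow_pos_of_pos (by positivity) _)
        (lt_min (Real.rpow_pos_of_pos (by positivity) _) (Real.rpow_pos_of_pos (by positivity) _))
  obtain ⟨ρ, hρpos, hρρ₀, hNρ⟩ :=
    frequently_nhdsGT_iff.mp (freq_coverNum_lt hF hne hηpos) ρ₀ hρ₀pos
  rw [show lowerBoxDim (Da a) + η = bh from rfl] at hNρ
  have hρa : ρ ≤ δ₀ ^ (1/c : ℝ) := le_trans hρρ₀.le (le_trans (min_le_left _ _) (min_le_left _ _))
  have hρhalf : ρ ≤ 1/2 := le_trans hρρ₀.le (le_trans (min_le_left _ _) (min_le_right _ _))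
  have hρe₁ : ρ ≤ (ε/3) ^ (1/e₁ : ℝ) :=
    le_trans hρρ₀.le (le_trans (min_le_right _ _) (min_le_left _ _))
  have hρe₂ : ρ ≤ (ε/18) ^ (1/e₂ : ℝ) :=
    le_trans hρρ₀.le (le_trans (min_le_right _ _) (le_trans (min_le_right _ _) (min_le_left _ _)))
  have hρe₃ : ρ ≤ (ε/3) ^ (1/e₃ : ℝ) :=
    le_trans hρρ₀.le (le_trans (min_le_right _ _) (le_trans (min_le_right _ _) (min_le_right _ _)))
  have hρ1 : ρ < 1 := by linarith
  -- general fact: ρ^e ≤ t when ρ ≤ t^(1/e)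
  have hrb : ∀ t e : ℝ, 0 < t → 0 < e → ρ ≤ t ^ (1/e : ℝ) → ρ ^ e ≤ t := by
    intro t e ht he hle
    calc ρ ^ e ≤ (t ^ (1/e : ℝ)) ^ e := Real.rpow_le_rpow hρpos.le hle he.le
      _ = t ^ ((1/e) * e : ℝ) := by rw [← Real.rpow_mul ht.le]
      _ = t := by rw [one_div_mul_cancel (ne_of_gt he), Real.rpow_one]
  -- scale quantities
  set K := Kidx a ρ with hKdef
  obtain ⟨hK1, hKa⟩ := Kidx_spec hpos hsumm (a := a) hρpos
  have hKN : K ≤ coverNum (Da a) ρ := sep_bound hpos hmono hsumm htot hρpos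
  have hxKN : xseq a K ≤ 6 * ρ * (coverNum (Da a) ρ) := len_bound hpos hmono hsumm htot hρpos
  have hKb : (K : ℝ) ≤ ρ ^ (-bh : ℝ) := by
    calc (K : ℝ) ≤ (coverNum (Da a) ρ : ℝ) := by exact_mod_cast hKN
      _ ≤ ρ ^ (-bh : ℝ) := hNρ.le
  have hxKb : xseq a K ≤ 6 * ρ ^ (1 - bh : ℝ) := by
    have h1 : 6 * ρ * (coverNum (Da a) ρ : ℝ) ≤ 6 * ρ * ρ ^ (-bh : ℝ) := by
      have := hNρ.le
      nlinarith
    have h2 : ρ * ρ ^ (-bh : ℝ) = ρ ^ (1 - bh : ℝ) := by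
      rw [show (1 : ℝ) - bh = 1 + (-bh) by ring, Real.rpow_add hρpos, Real.rpow_one]
    calc xseq a K ≤ 6 * ρ * (coverNum (Da a) ρ : ℝ) := hxKN
      _ ≤ 6 * ρ * ρ ^ (-bh : ℝ) := h1
      _ = 6 * ρ ^ (1 - bh : ℝ) := by rw [mul_assoc, h2]
  -- the cover scales
  set δ := ρ ^ (c : ℝ) with hδdef
  have hδpos : 0 < δ := Real.rpow_pos_of_pos hρpos _
  have hδδ₀ : δ ≤ δ₀ := by
    rw [hδdef]
    calc ρ ^ (c:ℝ) ≤ (δ₀ ^ (1/c : ℝ)) ^ (c:ℝ) := Real.rpow_le_rpow hρpos.le hρa hcpos.le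
      _ = δ₀ ^ ((1/c) * c : ℝ) := by rw [← Real.rpow_mul hδ₀.le]
      _ = δ₀ := by rw [one_div_mul_cancel (ne_of_gt hcpos), Real.rpow_one]
  have hδ1 : δ < 1 := Real.rpow_lt_one hρpos.le hρ1 hcpos
  have hτeq : δ ^ (1/θ : ℝ) = ρ ^ (c/θ : ℝ) := by
    rw [hδdef, ← Real.rpow_mul hρpos.le]
    congr 1
    field_simp
  have hτpos : 0 < δ ^ (1/θ : ℝ) := Real.rpow_pos_of_pos hδpos _
  have hτleδ : δ ^ (1/θ : ℝ) ≤ δ := by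
    have h1 : (1:ℝ) ≤ 1/θ := by rw [le_div_iff₀ hθ0]; linarith
    calc δ ^ (1/θ : ℝ) ≤ δ ^ (1:ℝ) := Real.rpow_le_rpow_of_exponent_ge hδpos hδ1.le h1
      _ = δ := Real.rpow_one δ
  -- the covering family
  set M := ⌊xseq a K / δ⌋₊ + 1 with hMdef
  set U : ℕ → Set ℝ := fun i =>
    if i < K then Icc (xseq a (i+1)) (xseq a (i+1) + δ ^ (1/θ : ℝ))
    else Icc (((i - K : ℕ) : ℝ) * δ) (((i - K : ℕ) : ℝ) * δ + δ) with hUdef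
  have hdiam : ∀ i, Metric.diam (U i) = if i < K then δ ^ (1/θ : ℝ) else δ := by
    intro i
    rw [hUdef]
    by_cases h : i < K
    · simp only [if_pos h]
      rw [Real.diam_Icc (by linarith)]
      ring
    · simp only [if_neg h]
      rw [Real.diam_Icc (by linarith)]
      ring
  refine ⟨δ, hδpos, hδδ₀, Finset.range (K + M), U, ?_, ?_, ?_⟩
  · -- coverage
    rintro y (rfl | ⟨k, hk, rfl⟩)
    · simp only [Set.mem_iUnion, exists_prop]
      refine ⟨K, Finset.mem_range.mpr (by omega), ?_⟩
      rw [hUdef]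
      simp only [if_neg (lt_irrefl K), Nat.sub_self]
      exact ⟨by simp, by simp; positivity⟩
    · rcases le_or_gt k K with hkK | hkK
      · simp only [Set.mem_iUnion, exists_prop]
        refine ⟨k - 1, Finset.mem_range.mpr (by omega), ?_⟩
        rw [hUdef]
        simp only [if_pos (show k - 1 < K by omega), show k - 1 + 1 = k by omega]
        exact ⟨le_rfl, by linarith [hτpos]⟩
      · have hx0 : 0 ≤ xseq a k := xseq_nonneg hpos hsumm (by omega)
        have hxK' : xseq a k ≤ xseq a K := xseq_anti hpos hsumm hK1 (by omega)
        set j := ⌊xseq a k / δ⌋₊ with hjdef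
        have hjM : j < M := by
          have h1 : xseq a k / δ ≤ xseq a K / δ := by gcongr
          have := Nat.floor_le_floor h1
          rw [hMdef]
          omega
        simp only [Set.mem_iUnion, exists_prop]
        refine ⟨K + j, Finset.mem_range.mpr (by omega), ?_⟩
        rw [hUdef]
        simp only [if_neg (show ¬ K + j < K by omega), show K + j - K = j from by omega]
        constructor
        · rw [← le_div_iff₀ hδpos]
          exact Nat.floor_le (by positivity)
        · have := Nat.lt_floor_add_one (xseq a k / δ)
          rw [← hjdef] at this
          rw [div_lt_iff₀ hδpos] at this
          linarith
  · -- sizes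
    intro i _
    rw [hdiam i]
    by_cases h : i < K
    · simp only [if_pos h]
      exact ⟨le_rfl, hτleδ⟩
    · simp only [if_neg h]
      exact ⟨hτleδ, le_rfl⟩
  · -- sum bound
    have hsum1 : ∑ i ∈ Finset.range (K + M), Metric.diam (U i) ^ s =
        K * (δ ^ (1/θ : ℝ)) ^ s + M * δ ^ s := by
      have h1 : ∀ i ∈ Finset.range (K + M), Metric.diam (U i) ^ s =
          if i < K then (δ ^ (1/θ : ℝ)) ^ s else δ ^ s := by
        intro i _
        rw [hdiam i]
        by_cases h : i < K
        · simp [if_pos h]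
        · simp [if_neg h]
      rw [Finset.sum_congr rfl h1, Finset.sum_ite]
      have h2 : (Finset.range (K + M)).filter (fun i => i < K) = Finset.range K := by
        ext i
        simp only [Finset.mem_filter, Finset.mem_range]
        omega
      have h3 : (Finset.range (K + M)).filter (fun i => ¬ i < K) = Finset.Ico K (K + M) := by
        ext i
        simp only [Finset.mem_filter, Finset.mem_range, Finset.mem_Ico]
        omega
      rw [h2, h3, Finset.sum_const, Finset.sum_const, Finset.card_range, Nat.card_Ico,
        show K + M - K = M from by omega]
      simp only [nsmul_eq_mul]
    rw [hsum1]
    -- term 1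
    have ht1 : (K : ℝ) * (δ ^ (1/θ : ℝ)) ^ s ≤ ε/3 := by
      have ha : (δ ^ (1/θ : ℝ)) ^ s = ρ ^ ((c/θ) * s : ℝ) := by
        rw [hτeq, ← Real.rpow_mul hρpos.le]
      have hb' : (K : ℝ) * (δ ^ (1/θ : ℝ)) ^ s ≤ ρ ^ (-bh : ℝ) * ρ ^ ((c/θ) * s : ℝ) := by
        rw [ha]
        exact mul_le_mul_of_nonneg_right hKb (Real.rpow_nonneg hρpos.le _)
      have hc' : ρ ^ (-bh : ℝ) * ρ ^ ((c/θ) * s : ℝ) = ρ ^ (e₁ : ℝ) := by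
        rw [← Real.rpow_add hρpos]
        congr 1
        rw [he₁def]
        field_simp
        ring
      calc (K : ℝ) * (δ ^ (1/θ : ℝ)) ^ s ≤ ρ ^ (e₁ : ℝ) := by rw [← hc']; exact hb'
        _ ≤ ε/3 := hrb (ε/3) e₁ (by positivity) he₁ hρe₁
    -- term 2
    have ht2 : (M : ℝ) * δ ^ s ≤ ε/3 + ε/3 := by
      have hMle : (M : ℝ) ≤ xseq a K / δ + 1 := by
        rw [hMdef]
        push_cast
        have := Nat.floor_le (div_nonneg (xseq_nonneg hpos hsumm hK1) hδpos.le)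
        linarith
      have hδs : (0:ℝ) < δ ^ s := Real.rpow_pos_of_pos hδpos _
      have h1 : (M : ℝ) * δ ^ s ≤ xseq a K * δ ^ (s - 1 : ℝ) + δ ^ s := by
        have hss : δ ^ (s - 1 : ℝ) = δ ^ s / δ := by
          rw [Real.rpow_sub hδpos, Real.rpow_one]
        rw [hss]
        have := mul_le_mul_of_nonneg_right hMle hδs.le
        calc (M : ℝ) * δ ^ s ≤ (xseq a K / δ + 1) * δ ^ s := this
          _ = xseq a K * (δ ^ s / δ) + δ ^ s := by field_simp
      have h2 : xseq a K * δ ^ (s - 1 : ℝ) ≤ 6 * ρ ^ (e₂ : ℝ) := by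
        have ha : δ ^ (s - 1 : ℝ) = ρ ^ (c * (s - 1) : ℝ) := by
          rw [hδdef, ← Real.rpow_mul hρpos.le]
        have hb' : xseq a K * δ ^ (s - 1 : ℝ) ≤ 6 * ρ ^ (1 - bh : ℝ) * ρ ^ (c * (s-1) : ℝ) := by
          rw [ha]
          exact mul_le_mul_of_nonneg_right hxKb (Real.rpow_nonneg hρpos.le _)
        have hc' : 6 * ρ ^ (1 - bh : ℝ) * ρ ^ (c * (s-1) : ℝ) = 6 * ρ ^ (e₂ : ℝ) := by
          rw [mul_assoc, ← Real.rpow_add hρpos]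
          congr 2
          rw [he₂def, hcdef]
          ring
        calc xseq a K * δ ^ (s - 1 : ℝ) ≤ 6 * ρ ^ (1 - bh : ℝ) * ρ ^ (c * (s-1) : ℝ) := hb'
          _ = 6 * ρ ^ (e₂ : ℝ) := hc'
      have h3 : 6 * ρ ^ (e₂ : ℝ) ≤ 6 * (ε/18) := by
        have := hrb (ε/18) e₂ (by positivity) he₂ hρe₂
        linarith
      have h4 : δ ^ s = ρ ^ (e₃ : ℝ) := by
        rw [hδdef, ← Real.rpow_mul hρpos.le, he₃def]
      have h5 : δ ^ s ≤ ε/3 := by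
        rw [h4]
        exact hrb (ε/3) e₃ (by positivity) he₃ hρe₃
      have h6 : 6 * (ε/18) = ε/3 := by ring
      linarith
    linarith

/-- `\underline{dim}_θ D_a = θb / (1 - (1-θ)b)` where `b` is the lower box dimension
of `D_a`. -/
theorem lowerIntDim_Da (a : ℕ → ℝ) (hpos : ∀ n ≥ 1, 0 < a n) (hmono : ∀ n ≥ 1, a (n + 1) ≤ a n)
    (hsumm : Summable fun n => a (n + 1)) (htot : ∑' n : ℕ, a (n + 1) = 1) :
    ∀ θ ∈ Set.Icc (0:ℝ) 1,
      lowerIntDim θ (Da a) =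
        θ * lowerBoxDim (Da a) / (1 - (1 - θ) * lowerBoxDim (Da a)) := by
  intro θ hθ
  obtain ⟨hθ0, hθ1⟩ := hθ
  rcases eq_or_lt_of_le hθ0 with rfl | hθpos
  · rw [lowerIntDim, if_pos rfl]
    have hc : (Da a).Countable := by
      have hsub : Da a ⊆ {0} ∪ Set.range (xseq a) := by
        rintro y (rfl | ⟨k, _, rfl⟩)
        · exact Or.inl rfl
        · exact Or.inr ⟨k, rfl⟩
      exact ((Set.countable_singleton 0).union (Set.countable_range _)).mono hsub
    rw [Set.Countable.dimH_zero hc]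
    simp
  · rw [lowerIntDim, if_neg (ne_of_gt hθpos)]
    have hF := Da_subset_Icc hpos hsumm htot
    have hne : (Da a).Nonempty := ⟨0, zero_mem_Da⟩
    have hb0 : 0 ≤ lowerBoxDim (Da a) := lowerBoxDim_nonneg hF hne
    have hb1 : lowerBoxDim (Da a) ≤ 1 := lowerBoxDim_le_one hF hne
    have hden : 0 < 1 - (1 - θ) * lowerBoxDim (Da a) := by nlinarith
    have hsstar : 0 ≤ θ * lowerBoxDim (Da a) / (1 - (1 - θ) * lowerBoxDim (Da a)) := by
      positivity
    apply le_antisymm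
    · apply le_of_forall_gt_imp_ge_of_dense
      intro t ht
      apply csInf_le
      · exact ⟨0, fun x hx => hx.1⟩
      · exact ⟨le_trans hsstar ht.le, upper_dir hpos hmono hsumm htot hθpos hθ1 ht⟩
    · apply le_csInf
      · refine ⟨θ * lowerBoxDim (Da a) / (1 - (1 - θ) * lowerBoxDim (Da a)) + 1,
          by linarith, upper_dir hpos hmono hsumm htot hθpos hθ1 (lt_add_one _)⟩
      · rintro x ⟨hx0, hx⟩
        exact lower_dir hF hne hθpos hθ1 hx0 hx
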